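/- Let N be a lattice and let U ⊆ N_ℝ be a convex set of the form U = conv(F) + σ₀, where F ⊆ N_ℝ is a finite set and σ₀ is the convex cone generated by finitely many elements of N. Let t > 0 and suppose N ∩ int(tU) = ∅. Let W = N ∩ (σ₀ − σ₀) (a saturated subgroup of N), let N' = N/W be the quotient lattice, let p_ℝ : N_ℝ → N'_ℝ = N_ℝ/(σ₀ − σ₀) be the induced projection, and let U' = p_ℝ(U). Then N' ∩ int(tU') = ∅, where the interior is taken in N'_ℝ. -/

import Mathlib

set_option maxHeartbeats 1000000


open Pointwise

/-- The lattice `ℤ^d` viewed inside its realification `ℝ^d`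
(a model of an arbitrary lattice of rank `d`). -/
def intPts (d : ℕ) : Set (Fin d → ℝ) := {x | ∀ i, ∃ n : ℤ, x i = (n : ℝ)}

/-- The convex cone generated by a set `s`: all finite nonnegative linear
combinations of elements of `s`. -/
def coneHull {V : Type*} [AddCommGroup V] [Module ℝ V] (s : Set V) : Set V :=
  {x | ∃ (n : ℕ) (c : Fin n → ℝ) (v : Fin n → V),
    (∀ i, 0 ≤ c i) ∧ (∀ i, v i ∈ s) ∧ x = ∑ i, c i • v i}

lemma sum_mem_coneHull {V : Type*} [AddCommGroup V] [Module ℝ V] {s : Set V}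
    {ι : Type*} [Fintype ι] (c : ι → ℝ) (v : ι → V)
    (hc : ∀ i, 0 ≤ c i) (hv : ∀ i, v i ∈ s) : ∑ i, c i • v i ∈ coneHull s := by
  classical
  let e := Fintype.equivFin ι
  exact ⟨Fintype.card ι, c ∘ e.symm, v ∘ e.symm, fun i => hc _, fun i => hv _,
    (e.symm.sum_comp fun j => c j • v j).symm⟩

lemma zero_mem_coneHull {V : Type*} [AddCommGroup V] [Module ℝ V] (s : Set V) :
    (0 : V) ∈ coneHull s :=
  ⟨0, Fin.elim0, Fin.elim0, fun i => i.elim0, fun i => i.elim0, by simp⟩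

lemma smul_mem_coneHull {V : Type*} [AddCommGroup V] [Module ℝ V] {s : Set V}
    {x : V} (hx : x ∈ coneHull s) {r : ℝ} (hr : 0 ≤ r) : r • x ∈ coneHull s := by
  obtain ⟨n, c, v, hc, hv, rfl⟩ := hx
  refine ⟨n, fun i => r * c i, v, fun i => mul_nonneg hr (hc i), hv, ?_⟩
  rw [Finset.smul_sum]
  simp [smul_smul]

/-- absorption lemma -/
lemma absorb (d : ℕ) (G : Finset (Fin d → ℝ)) (C : ℝ) :
    ∃ w, (∃ M : ℕ, w = ∑ g : ↥G, (M : ℝ) • (g : Fin d → ℝ)) ∧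
      ∀ k : Fin d → ℝ,
        (∃ u ∈ coneHull (G : Set (Fin d → ℝ)), ∃ v ∈ coneHull (G : Set (Fin d → ℝ)), k = u - v) →
        ‖k‖ ≤ C → k + w ∈ coneHull (G : Set (Fin d → ℝ)) := by
  classical
  set T : (↥G → ℝ) →ₗ[ℝ] (Fin d → ℝ) :=
    Fintype.linearCombination ℝ (fun g : ↥G => (g : Fin d → ℝ)) with hT
  have hTapp : ∀ c : ↥G → ℝ, T c = ∑ g : ↥G, c g • (g : Fin d → ℝ) := fun c => rfl
  -- every element of the cone is in the range of T
  have hcone_range : coneHull (G : Set (Fin d → ℝ)) ⊆ (LinearMap.range T : Set (Fin d → ℝ)) := by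
    rintro x ⟨n, c, v, hc, hv, rfl⟩
    refine Submodule.sum_mem _ fun i _ => Submodule.smul_mem _ _ ?_
    refine ⟨Pi.single (⟨v i, hv i⟩ : ↥G) 1, ?_⟩
    rw [hTapp]
    rw [Finset.sum_eq_single (⟨v i, hv i⟩ : ↥G)]
    · simp
    · intro b _ hb; rw [Pi.single_eq_of_ne hb]; simp
    · simp
  have hD_range : ∀ k : Fin d → ℝ,
      (∃ u ∈ coneHull (G : Set (Fin d → ℝ)), ∃ v ∈ coneHull (G : Set (Fin d → ℝ)), k = u - v) →
      k ∈ LinearMap.range T := by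
    rintro k ⟨u, hu, v, hv, rfl⟩
    exact sub_mem (hcone_range hu) (hcone_range hv)
  -- open mapping
  have hsurj : Function.Surjective T.rangeRestrict := T.surjective_rangeRestrict
  have hopen : IsOpenMap (LinearMap.toContinuousLinearMap T.rangeRestrict) :=
    ContinuousLinearMap.isOpenMap _ hsurj
  have h0 : (0 : ↥(LinearMap.range T)) ∈
      (LinearMap.toContinuousLinearMap T.rangeRestrict) '' Metric.ball 0 1 :=
    ⟨0, by simp, by simp⟩
  obtain ⟨r, hr, hrball⟩ := Metric.isOpen_iff.mp (hopen _ Metric.isOpen_ball) 0 h0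
  set C' : ℝ := |C| + 1 with hC'
  have hC'pos : 0 < C' := by positivity
  set fac : ℝ := r / (2 * C') with hfac
  have hfacpos : 0 < fac := by positivity
  set M : ℕ := ⌈fac⁻¹⌉₊ with hM
  refine ⟨∑ g : ↥G, (M : ℝ) • (g : Fin d → ℝ), ⟨M, rfl⟩, ?_⟩
  intro k hk hkC
  obtain ⟨k', hk'⟩ := hD_range k hk
  -- scale into the ball
  have hmem : fac • (⟨k, ⟨k', hk'⟩⟩ : ↥(LinearMap.range T)) ∈ Metric.ball (0 : ↥(LinearMap.range T)) r := by
    rw [Metric.mem_ball, dist_zero_right]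
    have h1 : ‖fac • (⟨k, ⟨k', hk'⟩⟩ : ↥(LinearMap.range T))‖ = fac * ‖k‖ := by
      rw [show ‖fac • (⟨k, ⟨k', hk'⟩⟩ : ↥(LinearMap.range T))‖ = ‖fac • k‖ from rfl,
        norm_smul, Real.norm_of_nonneg hfacpos.le]
    rw [h1]
    have : ‖k‖ ≤ C' := le_trans hkC (by rw [hC']; nlinarith [abs_nonneg C, le_abs_self C])
    calc fac * ‖k‖ ≤ fac * C' := by nlinarith [norm_nonneg k]
      _ = r / 2 := by rw [hfac]; field_simp [hC'pos.ne']
      _ < r := by linarith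
  obtain ⟨c, hcball, hc⟩ := hrball hmem
  rw [Metric.mem_ball, dist_zero_right] at hcball
  -- k = T (fac⁻¹ • c)
  have hkeq : k = T (fac⁻¹ • c) := by
    have h2 : T c = fac • k := congrArg Subtype.val hc
    rw [map_smul, h2, smul_smul, inv_mul_cancel₀ hfacpos.ne', one_smul]
  have hcoef : ∀ g : ↥G, |fac⁻¹ * c g| ≤ (M : ℝ) := by
    intro g
    have h3 : |c g| ≤ ‖c‖ := by
      have := norm_le_pi_norm c g
      simpa [Real.norm_eq_abs] using this
    have h4 : |fac⁻¹ * c g| ≤ fac⁻¹ := by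
      rw [abs_mul, abs_of_nonneg (inv_nonneg.mpr hfacpos.le)]
      nlinarith [inv_nonneg.mpr hfacpos.le, abs_nonneg (c g)]
    exact le_trans h4 (Nat.le_ceil _)
  have : k + ∑ g : ↥G, (M : ℝ) • (g : Fin d → ℝ)
      = ∑ g : ↥G, (fac⁻¹ * c g + M) • (g : Fin d → ℝ) := by
    rw [hkeq, hTapp]
    rw [← Finset.sum_add_distrib]
    congr 1; funext g
    rw [Pi.smul_apply, smul_eq_mul, add_smul]
  rw [this]
  refine sum_mem_coneHull _ _ (fun g => ?_) (fun g => g.2)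
  have := hcoef g
  have := neg_abs_le (fac⁻¹ * c g)
  linarith

lemma add_mem_coneHull {V : Type*} [AddCommGroup V] [Module ℝ V] {s : Set V}
    {x y : V} (hx : x ∈ coneHull s) (hy : y ∈ coneHull s) : x + y ∈ coneHull s := by
  obtain ⟨n, c, v, hc, hv, rfl⟩ := hx
  obtain ⟨m, c', v', hc', hv', rfl⟩ := hy
  have := sum_mem_coneHull (s := s) (ι := Fin n ⊕ Fin m) (Sum.elim c c') (Sum.elim v v')
    (fun i => by cases i <;> simp [hc, hc']) (fun i => by cases i <;> simp [hv, hv'])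
  simpa [Fintype.sum_sum_type] using this

/-- Let `N` be a lattice (modelled as `ℤ^d ⊆ ℝ^d`) and `U = conv(F) + σ₀ ⊆ N_ℝ`, where `F`
is finite and `σ₀` is the convex cone generated by a finite set `G` of lattice points.
Let `t > 0` with `N ∩ int(tU) = ∅`. Let `N' = N/(N ∩ (σ₀ - σ₀))` be the quotient lattice,
modelled via a linear projection `p : N_ℝ → N'_ℝ` with kernel the subspace `σ₀ - σ₀`
(the span of differences of elements of `σ₀`) mapping `N` onto `N'`, and let `U' = p(U)`.
Then `N' ∩ int(tU') = ∅`. -/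
theorem stmt_5 (d d' : ℕ) (F G : Finset (Fin d → ℝ))
    (hG : (G : Set (Fin d → ℝ)) ⊆ intPts d)
    (U : Set (Fin d → ℝ))
    (hU : U = {x | ∃ p ∈ convexHull ℝ (F : Set (Fin d → ℝ)),
      ∃ s ∈ coneHull (G : Set (Fin d → ℝ)), x = p + s})
    (t : ℝ) (ht : 0 < t)
    (hdisj : intPts d ∩ interior (t • U) = ∅)
    (p : (Fin d → ℝ) →ₗ[ℝ] (Fin d' → ℝ))
    (hker : LinearMap.ker p = Submodule.span ℝ
      {x | ∃ u ∈ coneHull (G : Set (Fin d → ℝ)),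
        ∃ v ∈ coneHull (G : Set (Fin d → ℝ)), x = u - v})
    (hlat : p '' intPts d = intPts d') :
    intPts d' ∩ interior (t • (p '' U)) = ∅ := by
  classical
  set σ : Set (Fin d → ℝ) := coneHull (G : Set (Fin d → ℝ)) with hσ
  set D : Set (Fin d → ℝ) := {x | ∃ u ∈ σ, ∃ v ∈ σ, x = u - v} with hDdef
  -- D is a submodule
  set Dsub : Submodule ℝ (Fin d → ℝ) :=
    { carrier := D
      add_mem' := by
        rintro a b ⟨u, hu, v, hv, rfl⟩ ⟨u', hu', v', hv', rfl⟩
        exact ⟨u + u', add_mem_coneHull hu hu', v + v', add_mem_coneHull hv hv', by abel⟩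
      zero_mem' := ⟨0, zero_mem_coneHull _, 0, zero_mem_coneHull _, by simp⟩
      smul_mem' := by
        rintro r a ⟨u, hu, v, hv, rfl⟩
        rcases le_or_gt 0 r with hr | hr
        · exact ⟨r • u, smul_mem_coneHull hu hr, r • v, smul_mem_coneHull hv hr,
            by rw [smul_sub]⟩
        · refine ⟨(-r) • v, smul_mem_coneHull hv (by linarith), (-r) • u,
            smul_mem_coneHull hu (by linarith), ?_⟩
          rw [smul_sub]; simp [neg_smul]; abel } with hDsub
  have hkerD : (LinearMap.ker p : Set (Fin d → ℝ)) = D := by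
    have : LinearMap.ker p = Dsub := by rw [hker]; exact Submodule.span_eq Dsub
    rw [this]; rfl
  have hmemker : ∀ z : Fin d → ℝ, p z = 0 ↔ z ∈ D := by
    intro z
    rw [← hkerD]
    exact ⟨fun h => LinearMap.mem_ker.mpr h, fun h => LinearMap.mem_ker.mp h⟩
  have hpσ : ∀ s ∈ σ, p s = 0 := by
    intro s hs
    exact (hmemker s).mpr ⟨s, hs, 0, zero_mem_coneHull _, by simp⟩
  -- main argument
  rw [Set.eq_empty_iff_forall_notMem]
  rintro y ⟨hy1, hy2⟩
  rw [← hlat] at hy1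
  obtain ⟨x, hxInt, rfl⟩ := hy1
  have hc : Continuous p := p.continuous_of_finiteDimensional
  -- x lies in the interior of the preimage
  have hx2 : x ∈ interior (p ⁻¹' (t • (p '' U))) :=
    interior_maximal (Set.preimage_mono interior_subset)
      (isOpen_interior.preimage hc) hy2
  -- the preimage is contained in t•A + D
  set A : Set (Fin d → ℝ) := convexHull ℝ (F : Set (Fin d → ℝ)) with hA
  have hsub : p ⁻¹' (t • (p '' U)) ⊆ (t • A) + D := by
    intro z hz
    rw [Set.mem_preimage, Set.mem_smul_set] at hz
    obtain ⟨u, hu, hpu⟩ := hz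
    obtain ⟨u₀, hu₀, rfl⟩ := hu
    rw [hU] at hu₀
    obtain ⟨f, hf, s, hs, rfl⟩ := hu₀
    have hpz : p (z - t • f) = 0 := by
      rw [map_sub, map_smul, ← hpu, map_add, hpσ s hs, add_zero, sub_self]
    refine Set.mem_add.mpr ⟨t • f, Set.smul_mem_smul_set hf, z - t • f,
      (hmemker _).mp hpz, by abel⟩
  have hx3 : x ∈ interior ((t • A) + D) := interior_mono hsub hx2
  rw [mem_interior_iff_mem_nhds, Metric.mem_nhds_iff] at hx3
  obtain ⟨ε, hε, hball⟩ := hx3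
  -- bound on A
  obtain ⟨R, hR⟩ := (Bornology.IsBounded.exists_pos_norm_le
    ((Set.Finite.isCompact_convexHull (𝕜 := ℝ) F.finite_toSet).isBounded))
  set C : ℝ := ε + ‖x‖ + t * R with hC
  obtain ⟨w, ⟨M, hwM⟩, habs⟩ := absorb d G C
  -- w is a lattice point
  have hwInt : w ∈ intPts d := by
    rw [hwM]
    intro i
    have hg : ∀ g : ↥G, ∃ n : ℤ, ((M : ℝ) • (g : Fin d → ℝ)) i = (n : ℝ) := by
      intro g
      obtain ⟨n, hn⟩ := hG g.2 i
      exact ⟨M * n, by rw [Pi.smul_apply, smul_eq_mul, hn]; push_cast; ring⟩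
    choose n hn using hg
    refine ⟨∑ g : ↥G, n g, ?_⟩
    rw [Finset.sum_apply]
    rw [Finset.sum_congr rfl (fun g _ => hn g)]
    push_cast
    ring
  have hxwInt : x + w ∈ intPts d := by
    intro i
    obtain ⟨n1, hn1⟩ := hxInt i
    obtain ⟨n2, hn2⟩ := hwInt i
    exact ⟨n1 + n2, by rw [Pi.add_apply, hn1, hn2]; push_cast; ring⟩
  -- the ball around x + w is in t • U
  have hball2 : Metric.ball (x + w) ε ⊆ t • U := by
    intro b hb
    have hb' : b - w ∈ Metric.ball x ε := by
      rw [Metric.mem_ball, dist_eq_norm] at hb ⊢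
      have : b - w - x = b - (x + w) := by abel
      rw [this]; exact hb
    obtain ⟨a, ha, k, hk, hbk⟩ := Set.mem_add.mp (hball hb')
    obtain ⟨a₀, ha₀, rfl⟩ := ha
    -- norm bound on k
    have hkC : ‖k‖ ≤ C := by
      have hkval : k = (b - w - x) + x - t • a₀ := by
        have : t • a₀ + k = b - w := hbk
        rw [← this]; abel
      have h1 : ‖k‖ ≤ ‖b - w - x‖ + ‖x‖ + ‖t • a₀‖ := by
        rw [hkval]
        calc ‖(b - w - x) + x - t • a₀‖ ≤ ‖(b - w - x) + x‖ + ‖t • a₀‖ := norm_sub_le _ _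
          _ ≤ ‖b - w - x‖ + ‖x‖ + ‖t • a₀‖ := by
              have := norm_add_le (b - w - x) x; linarith
      have h2 : ‖t • a₀‖ ≤ t * R := by
        rw [norm_smul, Real.norm_of_nonneg ht.le]
        exact mul_le_mul_of_nonneg_left (hR.2 a₀ ha₀) ht.le
      have h3 : ‖b - w - x‖ < ε := by
        rw [Metric.mem_ball, dist_eq_norm] at hb'
        exact hb'
      rw [hC]; linarith
    have hkw : k + w ∈ σ := habs k hk hkC
    -- b = t • (a₀ + t⁻¹ • (k + w))
    refine Set.mem_smul_set.mpr ⟨a₀ + t⁻¹ • (k + w), ?_, ?_⟩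
    · rw [hU]
      exact ⟨a₀, ha₀, t⁻¹ • (k + w), smul_mem_coneHull hkw (inv_nonneg.mpr ht.le), rfl⟩
    · rw [smul_add, smul_inv_smul₀ ht.ne']
      have : t • a₀ + k = b - w := hbk
      have hb2 : b = t • a₀ + (k + w) := by rw [← add_assoc, this]; abel
      rw [hb2]
  have hxw : x + w ∈ interior (t • U) :=
    interior_maximal hball2 Metric.isOpen_ball (Metric.mem_ball_self hε)
  exact Set.eq_empty_iff_forall_notMem.mp hdisj (x + w) ⟨hxwInt, hxw⟩
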